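/- The diamond product f ⋄ g := E(E⁻¹(f) · E⁻¹(g)) satisfies (f ⋄ g)(x) = ∑_{k=0}^∞ (f^{(k)}(x)/k!) · (g^{(k)}(x)/k!) · x^k (x+1)^k for all f, g ∈ ℝ[x]. -/

import Mathlib

open Polynomial Finset

/-- The polynomial binomial coefficient `C(x,k) = x(x-1)⋯(x-k+1)/k!` in `ℝ[x]`. -/
noncomputable def binomPoly (k : ℕ) : Polynomial ℝ :=
  Polynomial.C ((k.factorial : ℝ)⁻¹) * descPochhammer ℝ k

lemma choose_mul' {k s : ℕ} (hsk : s ≤ k) (n : ℕ) :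
    n.choose k * k.choose s = n.choose s * (n - s).choose (k - s) := by
  rcases le_or_gt k n with h | h
  · exact Nat.choose_mul hsk
  · rw [Nat.choose_eq_zero_of_lt h, Nat.zero_mul]
    rcases le_or_gt s n with hs | hs
    · rw [Nat.choose_eq_zero_of_lt (by omega : n - s < k - s), Nat.mul_zero]
    · rw [Nat.choose_eq_zero_of_lt hs, Nat.zero_mul]

lemma vand_range (p q r : ℕ) :
    (p+q).choose r = ∑ s ∈ Finset.range (r+1), p.choose s * q.choose (r - s) := by
  rw [Nat.add_choose_eq, Finset.Nat.sum_antidiagonal_eq_sum_range_succ_mk]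

lemma vand_aux (a x i : ℕ) :
    ∑ t ∈ Finset.range (a+1), a.choose t * x.choose (i+t) = (a+x).choose (a+i) := by
  rw [vand_range a x (a+i)]
  rw [← Finset.sum_subset (Finset.range_subset_range.2 (by omega) :
      Finset.range (a+1) ⊆ Finset.range (a+i+1))]
  · rw [← Finset.sum_range_reflect]
    apply Finset.sum_congr rfl
    intro t ht
    simp only [Finset.mem_range] at ht
    rw [show a + 1 - 1 - t = a - t from by omega, Nat.choose_symm (by omega : t ≤ a),
      show i + (a - t) = a + i - t from by omega]
  · intro s _ hs
    simp only [Finset.mem_range, not_lt] at hs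
    rw [Nat.choose_eq_zero_of_lt (by omega), Nat.zero_mul]

lemma T_lemma (m n i : ℕ) :
    ∑ k ∈ Finset.range (m+1), m.choose k * n.choose k * k.choose i
      = m.choose i * (m+n-i).choose m := by
  rcases le_or_gt i m with him | him
  · have hsub : Finset.Ico i (m+1) ⊆ Finset.range (m+1) := by
      rw [Finset.range_eq_Ico]; exact Finset.Ico_subset_Ico (by omega) le_rfl
    rw [← Finset.sum_subset hsub (by
      intro k hk hk2
      simp only [Finset.mem_range, Finset.mem_Ico, not_and, not_le, not_lt] at hk hk2
      rw [Nat.choose_eq_zero_of_lt (by omega : k < i), Nat.mul_zero])]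
    rw [Finset.sum_Ico_eq_sum_range]
    have hlen : m + 1 - i = m - i + 1 := by omega
    rw [hlen]
    have hterm : ∀ t ∈ Finset.range (m - i + 1),
        m.choose (i+t) * n.choose (i+t) * (i+t).choose i
          = m.choose i * ((m-i).choose t * n.choose (i+t)) := by
      intro t ht
      simp only [Finset.mem_range] at ht
      have h1 : m.choose (i+t) * (i+t).choose i = m.choose i * (m-i).choose t := by
        have := Nat.choose_mul (n := m) (by omega : i ≤ i + t)
        simpa using this
      calc m.choose (i+t) * n.choose (i+t) * (i+t).choose i
          = m.choose (i+t) * (i+t).choose i * n.choose (i+t) := by ring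
        _ = m.choose i * (m-i).choose t * n.choose (i+t) := by rw [h1]
        _ = m.choose i * ((m-i).choose t * n.choose (i+t)) := by ring
    rw [Finset.sum_congr rfl hterm, ← Finset.mul_sum, vand_aux (m-i) n i,
      show m - i + n = m + n - i from by omega, show m - i + i = m from by omega]
  · rw [Nat.choose_eq_zero_of_lt him, Nat.zero_mul]
    apply Finset.sum_eq_zero
    intro k hk
    simp only [Finset.mem_range] at hk
    rw [Nat.choose_eq_zero_of_lt (by omega : k < i), Nat.mul_zero]

lemma prod_formula (x m n : ℕ) :
    x.choose m * x.choose n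
      = ∑ i ∈ Finset.range (m+1), m.choose i * ((m+n-i).choose m * x.choose (m+n-i)) := by
  have hterm : ∀ i, i ≤ n → (m+n-i).choose m * x.choose (m+n-i)
      = x.choose m * (x-m).choose (n-i) := by
    intro i hi
    rw [Nat.mul_comm, choose_mul' (by omega : m ≤ m+n-i) x,
      show m + n - i - m = n - i from by omega]
  rw [← Finset.sum_subset (Finset.range_subset_range.2 (by omega : min m n + 1 ≤ m + 1)) (by
    intro i hi hi2
    simp only [Finset.mem_range, not_lt] at hi hi2
    rw [Nat.choose_eq_zero_of_lt (by omega : m+n-i < m), Nat.zero_mul, Nat.mul_zero])]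
  rw [Finset.sum_congr rfl (fun i hi => by
    simp only [Finset.mem_range] at hi
    rw [hterm i (by omega)])]
  have : ∑ i ∈ Finset.range (min m n + 1), m.choose i * (x.choose m * (x-m).choose (n-i))
      = x.choose m * ∑ i ∈ Finset.range (min m n + 1), m.choose i * (x-m).choose (n-i) := by
    rw [Finset.mul_sum]; apply Finset.sum_congr rfl; intro i _; ring
  rw [this]
  rw [Finset.sum_subset (Finset.range_subset_range.2 (by omega : min m n + 1 ≤ n + 1)) (by
    intro i hi hi2
    simp only [Finset.mem_range, not_lt] at hi hi2
    rw [Nat.choose_eq_zero_of_lt (by omega : m < i), Nat.zero_mul])]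
  rw [← vand_range m (x-m) n]
  rcases le_or_gt m x with h | h
  · congr 2
    omega
  · rw [Nat.choose_eq_zero_of_lt h, Nat.zero_mul, Nat.zero_mul]

lemma nat_key (x m n N : ℕ) (hm : m < N) :
    x.choose m * x.choose n
      = ∑ k ∈ Finset.range N, ∑ j ∈ Finset.range (k+1),
          m.choose k * n.choose k * k.choose j * x.choose (m+n-k+j) := by
  -- restrict to k ≤ m
  rw [← Finset.sum_subset (Finset.range_subset_range.2 (by omega : m + 1 ≤ N)) (by
    intro k hk hk2
    simp only [Finset.mem_range, not_lt] at hk hk2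
    apply Finset.sum_eq_zero
    intro j _
    rw [Nat.choose_eq_zero_of_lt (by omega : m < k), Nat.zero_mul, Nat.zero_mul, Nat.zero_mul])]
  -- inner sum via vandermonde
  have hinner : ∀ k, k ≤ m → ∑ j ∈ Finset.range (k+1),
      m.choose k * n.choose k * k.choose j * x.choose (m+n-k+j)
        = m.choose k * n.choose k * (x+k).choose (m+n) := by
    intro k hk
    have : ∀ j ∈ Finset.range (k+1), m.choose k * n.choose k * k.choose j * x.choose (m+n-k+j)
        = m.choose k * n.choose k * (k.choose j * x.choose ((m+n-k)+j)) := by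
      intro j _; ring
    rw [Finset.sum_congr rfl this, ← Finset.mul_sum, vand_aux k x (m+n-k)]
    have h1 : k + (m+n-k) = m+n := by omega
    rw [h1, Nat.add_comm k x]
  rw [Finset.sum_congr rfl (fun k hk => hinner k (by
    simp only [Finset.mem_range] at hk; omega))]
  symm
  -- expand (x+k).choose (m+n) and swap
  have hexp : ∀ k, (x+k).choose (m+n)
      = ∑ i ∈ Finset.range (m+n+1), x.choose i * k.choose (m+n-i) := fun k =>
    vand_range x k (m+n)
  calc ∑ k ∈ Finset.range (m+1), m.choose k * n.choose k * (x+k).choose (m+n)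
      = ∑ k ∈ Finset.range (m+1), ∑ i ∈ Finset.range (m+n+1),
          x.choose i * (m.choose k * n.choose k * k.choose (m+n-i)) := by
        apply Finset.sum_congr rfl
        intro k _
        rw [hexp k, Finset.mul_sum]
        apply Finset.sum_congr rfl
        intro i _; ring
    _ = ∑ i ∈ Finset.range (m+n+1), x.choose i *
          ∑ k ∈ Finset.range (m+1), m.choose k * n.choose k * k.choose (m+n-i) := by
        rw [Finset.sum_comm]
        apply Finset.sum_congr rfl
        intro i _
        rw [Finset.mul_sum]
    _ = ∑ i ∈ Finset.range (m+n+1),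
          x.choose i * (m.choose (m+n-i) * (m+n-(m+n-i)).choose m) := by
        apply Finset.sum_congr rfl
        intro i _
        rw [T_lemma m n (m+n-i)]
    _ = ∑ i ∈ Finset.range (m+n+1),
          x.choose (m+n-i) * (m.choose i * (m+n-i).choose m) := by
        rw [← Finset.sum_range_reflect]
        apply Finset.sum_congr rfl
        intro i hi
        simp only [Finset.mem_range] at hi
        have h1 : m + n + 1 - 1 - i = m + n - i := by omega
        have h2 : m + n - (m + n - i) = i := by omega
        rw [h1, h2]
    _ = x.choose m * x.choose n := by
        rw [prod_formula x m n]
        rw [← Finset.sum_subset (Finset.range_subset_range.2 (by omega : m + 1 ≤ m+n+1)) (by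
          intro i hi hi2
          simp only [Finset.mem_range, not_lt] at hi hi2
          rw [Nat.choose_eq_zero_of_lt (by omega : m < i), Nat.zero_mul, Nat.mul_zero])]
        apply Finset.sum_congr rfl
        intro i _; ring

lemma binomPoly_eval (j x : ℕ) : (binomPoly j).eval (x : ℝ) = x.choose j := by
  rw [binomPoly, eval_mul, eval_C, descPochhammer_eval_eq_descFactorial,
    Nat.descFactorial_eq_factorial_mul_choose]
  push_cast
  rw [← mul_assoc, inv_mul_cancel₀ (by exact_mod_cast j.factorial_ne_zero), one_mul]

lemma binom_mul (m n N : ℕ) (hm : m < N) :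
    binomPoly m * binomPoly n
      = ∑ k ∈ Finset.range N, ∑ j ∈ Finset.range (k+1),
          ((m.choose k * n.choose k * k.choose j : ℕ) : ℝ) • binomPoly (m+n-k+j) := by
  apply Polynomial.eq_of_infinite_eval_eq
  apply Set.Infinite.mono (s := Set.range ((↑) : ℕ → ℝ))
  · rintro _ ⟨x, rfl⟩
    show _ = _
    rw [eval_mul, binomPoly_eval, binomPoly_eval, eval_finset_sum]
    simp only [eval_finset_sum, eval_smul, binomPoly_eval, smul_eq_mul]
    rw [← Nat.cast_mul]
    rw [nat_key x m n N hm]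
    push_cast
    rfl
  · exact Set.infinite_range_of_injective Nat.cast_injective

lemma X_add_one_pow (a k : ℕ) :
    (X : Polynomial ℝ)^a * (X + 1)^k
      = ∑ j ∈ Finset.range (k+1), ((k.choose j : ℕ) : ℝ) • (X : Polynomial ℝ)^(a+j) := by
  rw [add_pow, Finset.mul_sum]
  apply Finset.sum_congr rfl
  intro j _
  rw [one_pow, mul_one, pow_add, smul_eq_C_mul, Polynomial.C_eq_natCast]
  ring

lemma core (E : Polynomial ℝ ≃ₗ[ℝ] Polynomial ℝ)
    (hE : ∀ k : ℕ, E (binomPoly k) = Polynomial.X ^ k) (m n N : ℕ) (hm : m < N) :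
    E (binomPoly m * binomPoly n)
      = ∑ k ∈ Finset.range N, ((m.choose k * n.choose k : ℕ) : ℝ)
          • ((X : Polynomial ℝ)^(m+n-k) * (X + 1)^k) := by
  rw [binom_mul m n N hm, map_sum]
  apply Finset.sum_congr rfl
  intro k _
  rw [map_sum, X_add_one_pow, Finset.smul_sum]
  apply Finset.sum_congr rfl
  intro j _
  rw [map_smul, hE, smul_smul]
  congr 1
  push_cast
  ring

lemma term_monomial (k m n : ℕ) :
    (Polynomial.C ((k.factorial : ℝ)⁻¹) * derivative^[k] (X^m : Polynomial ℝ))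
      * (Polynomial.C ((k.factorial : ℝ)⁻¹) * derivative^[k] (X^n : Polynomial ℝ))
      * X^k * (X + 1)^k
    = ((m.choose k * n.choose k : ℕ) : ℝ) • ((X : Polynomial ℝ)^(m+n-k) * (X + 1)^k) := by
  rw [iterate_derivative_X_pow_eq_C_mul, iterate_derivative_X_pow_eq_C_mul]
  rcases le_or_gt k m with hkm | hkm
  · rcases le_or_gt k n with hkn | hkn
    · have hc : ∀ a : ℕ, (a.factorial : ℝ)⁻¹ * (Nat.descFactorial m a : ℝ) = m.choose a := by
        intro a
        rw [Nat.descFactorial_eq_factorial_mul_choose]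
        push_cast
        rw [← mul_assoc, inv_mul_cancel₀ (by exact_mod_cast a.factorial_ne_zero), one_mul]
      have hc2 : (k.factorial : ℝ)⁻¹ * (Nat.descFactorial n k : ℝ) = n.choose k := by
        rw [Nat.descFactorial_eq_factorial_mul_choose]
        push_cast
        rw [← mul_assoc, inv_mul_cancel₀ (by exact_mod_cast k.factorial_ne_zero), one_mul]
      have hx : (X : Polynomial ℝ)^(m-k) * X^(n-k) * X^k = X^(m+n-k) := by
        rw [← pow_add, ← pow_add]
        congr 1
        omega
      calc (C ((k.factorial:ℝ)⁻¹) * (C (Nat.descFactorial m k : ℝ) * X^(m-k)))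
            * (C ((k.factorial:ℝ)⁻¹) * (C (Nat.descFactorial n k : ℝ) * X^(n-k)))
            * X^k * (X+1)^k
          = (C ((k.factorial:ℝ)⁻¹ * (Nat.descFactorial m k : ℝ))
              * C ((k.factorial:ℝ)⁻¹ * (Nat.descFactorial n k : ℝ)))
              * (X^(m-k) * X^(n-k) * X^k * (X+1)^k) := by
            simp only [C_mul]
            ring
        _ = ((m.choose k * n.choose k : ℕ) : ℝ) • (X^(m+n-k) * (X+1)^k) := by
            rw [hc k, hc2, ← mul_assoc, hx, smul_eq_C_mul, Nat.cast_mul, C_mul]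
            ring
    · rw [Nat.descFactorial_eq_zero_iff_lt.2 hkn, Nat.choose_eq_zero_of_lt hkn]
      simp
  · rw [Nat.descFactorial_eq_zero_iff_lt.2 hkm, Nat.choose_eq_zero_of_lt hkm]
    simp

lemma main_aux (E : Polynomial ℝ ≃ₗ[ℝ] Polynomial ℝ)
    (hE : ∀ k : ℕ, E (binomPoly k) = Polynomial.X ^ k) (N M : ℕ) (f g : Polynomial ℝ)
    (hf : f.natDegree < N) (hg : g.natDegree < M) :
    E (E.symm f * E.symm g)
      = ∑ k ∈ Finset.range N,
          (Polynomial.C ((k.factorial : ℝ)⁻¹) * derivative^[k] f)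
            * (Polynomial.C ((k.factorial : ℝ)⁻¹) * derivative^[k] g)
            * Polynomial.X ^ k * (Polynomial.X + 1) ^ k := by
  have hEs : ∀ j : ℕ, E.symm (X^j : Polynomial ℝ) = binomPoly j := fun j => by
    rw [← hE j, LinearEquiv.symm_apply_apply]
  have hf' : f = ∑ m ∈ Finset.range N, f.coeff m • (X : Polynomial ℝ)^m := by
    conv_lhs => rw [f.as_sum_range' N hf]
    simp [smul_X_eq_monomial]
  have hg' : g = ∑ n ∈ Finset.range M, g.coeff n • (X : Polynomial ℝ)^n := by
    conv_lhs => rw [g.as_sum_range' M hg]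
    simp [smul_X_eq_monomial]
  have hterm : ∀ k : ℕ,
      (Polynomial.C ((k.factorial : ℝ)⁻¹) * derivative^[k] f)
        * (Polynomial.C ((k.factorial : ℝ)⁻¹) * derivative^[k] g)
        * Polynomial.X ^ k * (Polynomial.X + 1) ^ k
      = ∑ m ∈ Finset.range N, ∑ n ∈ Finset.range M,
          (f.coeff m * g.coeff n) •
            ((Polynomial.C ((k.factorial : ℝ)⁻¹) * derivative^[k] (X^m : Polynomial ℝ))
              * (Polynomial.C ((k.factorial : ℝ)⁻¹) * derivative^[k] (X^n : Polynomial ℝ))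
              * X^k * (X + 1)^k) := by
    intro k
    conv_lhs => rw [hf', hg']
    rw [Polynomial.iterate_derivative_sum, Polynomial.iterate_derivative_sum]
    simp only [Polynomial.iterate_derivative_smul]
    rw [Finset.mul_sum, Finset.mul_sum, Finset.sum_mul_sum, Finset.sum_mul, Finset.sum_mul]
    apply Finset.sum_congr rfl
    intro m _
    rw [Finset.sum_mul, Finset.sum_mul]
    apply Finset.sum_congr rfl
    intro n _
    rw [mul_smul_comm, mul_smul_comm, smul_mul_smul_comm, smul_mul_assoc, smul_mul_assoc]
  calc E (E.symm f * E.symm g)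
      = ∑ m ∈ Finset.range N, ∑ n ∈ Finset.range M,
          (f.coeff m * g.coeff n) • E (binomPoly m * binomPoly n) := by
        conv_lhs => rw [hf', hg']
        rw [map_sum, map_sum, Finset.sum_mul_sum, map_sum]
        apply Finset.sum_congr rfl
        intro m _
        rw [map_sum]
        apply Finset.sum_congr rfl
        intro n _
        rw [map_smul, map_smul, smul_mul_smul_comm, map_smul, hEs, hEs]
    _ = ∑ m ∈ Finset.range N, ∑ n ∈ Finset.range M, (f.coeff m * g.coeff n) •
          ∑ k ∈ Finset.range N, ((m.choose k * n.choose k : ℕ) : ℝ)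
            • ((X : Polynomial ℝ)^(m+n-k) * (X + 1)^k) := by
        apply Finset.sum_congr rfl
        intro m hm
        apply Finset.sum_congr rfl
        intro n _
        rw [core E hE m n N (Finset.mem_range.1 hm)]
    _ = ∑ m ∈ Finset.range N, ∑ n ∈ Finset.range M, ∑ k ∈ Finset.range N,
          (f.coeff m * g.coeff n) •
            ((Polynomial.C ((k.factorial : ℝ)⁻¹) * derivative^[k] (X^m : Polynomial ℝ))
              * (Polynomial.C ((k.factorial : ℝ)⁻¹) * derivative^[k] (X^n : Polynomial ℝ))
              * X^k * (X + 1)^k) := by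
        apply Finset.sum_congr rfl
        intro m _
        apply Finset.sum_congr rfl
        intro n _
        rw [Finset.smul_sum]
        apply Finset.sum_congr rfl
        intro k _
        rw [term_monomial]
    _ = ∑ m ∈ Finset.range N, ∑ k ∈ Finset.range N, ∑ n ∈ Finset.range M,
          (f.coeff m * g.coeff n) •
            ((Polynomial.C ((k.factorial : ℝ)⁻¹) * derivative^[k] (X^m : Polynomial ℝ))
              * (Polynomial.C ((k.factorial : ℝ)⁻¹) * derivative^[k] (X^n : Polynomial ℝ))
              * X^k * (X + 1)^k) :=
        Finset.sum_congr rfl (fun m _ => Finset.sum_comm)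
    _ = ∑ k ∈ Finset.range N, ∑ m ∈ Finset.range N, ∑ n ∈ Finset.range M,
          (f.coeff m * g.coeff n) •
            ((Polynomial.C ((k.factorial : ℝ)⁻¹) * derivative^[k] (X^m : Polynomial ℝ))
              * (Polynomial.C ((k.factorial : ℝ)⁻¹) * derivative^[k] (X^n : Polynomial ℝ))
              * X^k * (X + 1)^k) :=
        Finset.sum_comm
    _ = ∑ k ∈ Finset.range N,
          (Polynomial.C ((k.factorial : ℝ)⁻¹) * derivative^[k] f)
            * (Polynomial.C ((k.factorial : ℝ)⁻¹) * derivative^[k] g)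
            * Polynomial.X ^ k * (Polynomial.X + 1) ^ k :=
        Finset.sum_congr rfl (fun k _ => (hterm k).symm)

/-- Wagner's formula for the diamond product `f ⋄ g = E(E⁻¹(f)·E⁻¹(g))`:
`(f ⋄ g)(x) = ∑_k (f^{(k)}(x)/k!)(g^{(k)}(x)/k!)·x^k(x+1)^k`.
The sum is finite; terms with `k > deg f` vanish. -/
theorem diamond_product_formula (E : Polynomial ℝ ≃ₗ[ℝ] Polynomial ℝ)
    (hE : ∀ k : ℕ, E (binomPoly k) = Polynomial.X ^ k) (f g : Polynomial ℝ) :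
    E (E.symm f * E.symm g)
      = ∑ k ∈ Finset.range (f.natDegree + 1),
          (Polynomial.C ((k.factorial : ℝ)⁻¹) * derivative^[k] f)
            * (Polynomial.C ((k.factorial : ℝ)⁻¹) * derivative^[k] g)
            * Polynomial.X ^ k * (Polynomial.X + 1) ^ k :=
  main_aux E hE (f.natDegree + 1) (g.natDegree + 1) f g (Nat.lt_succ_self _) (Nat.lt_succ_self _)
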